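/- Consider the velocity-aided attitude system (Ṙ, v̇) = (RΩ×, Ra + g) on SO(3) × ℝ³ and the observer dynamics (ż̂, Q̂̇, x̂̇) = (g, Q̂Ω×, Q̂a + g) on the group G = (ℝ³ × SO(3)) ⋉ ℝ³, both driven by inputs (Ω(t), a(t)) ∈ ℝ³ × ℝ³ and constant gravity vector g ∈ ℝ³. Then the error e(X̂, ξ) := (RQ̂ᵀ, v − RQ̂ᵀx̂ − (I − RQ̂ᵀ)ẑ) is constant along trajectories: both components have zero time derivative. -/

import Mathlib

/-!
STATEMENT 19: Synchrony of the velocity-aided attitude observer. For the system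
(Ṙ, v̇) = (RΩ×, Ra + g) on SO(3) × ℝ³ and the observer (ż̂, Q̂̇, x̂̇) = (g, Q̂Ω×, Q̂a + g)
on G = (ℝ³ × SO(3)) ⋉ ℝ³, driven by the same inputs (Ω(t), a(t)) and constant
gravity g, the error e(X̂, ξ) = (RQ̂ᵀ, v − RQ̂ᵀx̂ − (I − RQ̂ᵀ)ẑ) is constant along
trajectories: both components have zero time derivative.
-/

open Matrix

attribute [local instance] Matrix.linftyOpNormedRing Matrix.linftyOpNormedAlgebra

/-- The skew-symmetric matrix `Ω×` of `Ω ∈ ℝ³`. -/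
def skewMat (Ω : Fin 3 → ℝ) : Matrix (Fin 3) (Fin 3) ℝ :=
  !![0, -Ω 2, Ω 1; Ω 2, 0, -Ω 0; -Ω 1, Ω 0, 0]

lemma skewMat_transpose (Ω : Fin 3 → ℝ) : (skewMat Ω)ᵀ = -skewMat Ω := by
  ext i j; fin_cases i <;> fin_cases j <;> simp [skewMat]

noncomputable def vaaTrL : Matrix (Fin 3) (Fin 3) ℝ →L[ℝ] Matrix (Fin 3) (Fin 3) ℝ :=
  LinearMap.toContinuousLinearMap
    { toFun := Matrix.transpose
      map_add' := fun _ _ => Matrix.transpose_add _ _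
      map_smul' := fun _ _ => Matrix.transpose_smul _ _ }

lemma hasDerivAt_transpose {A : ℝ → Matrix (Fin 3) (Fin 3) ℝ}
    {A' : Matrix (Fin 3) (Fin 3) ℝ} {t : ℝ}
    (h : HasDerivAt A A' t) : HasDerivAt (fun s => (A s)ᵀ) A'ᵀ t :=
  vaaTrL.hasFDerivAt.comp_hasDerivAt t h

noncomputable def vaaEntL (i j : Fin 3) : Matrix (Fin 3) (Fin 3) ℝ →L[ℝ] ℝ :=
  LinearMap.toContinuousLinearMap
    { toFun := fun M => M i j
      map_add' := fun _ _ => rfl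
      map_smul' := fun _ _ => rfl }

lemma hasDerivAt_entry {A : ℝ → Matrix (Fin 3) (Fin 3) ℝ}
    {A' : Matrix (Fin 3) (Fin 3) ℝ} {t : ℝ}
    (h : HasDerivAt A A' t) (i j : Fin 3) :
    HasDerivAt (fun s => A s i j) (A' i j) t :=
  (vaaEntL i j).hasFDerivAt.comp_hasDerivAt t h

theorem vaa_synchrony
    -- inputs: angular velocity Ω(t), specific acceleration a(t), gravity g
    (Ω a : ℝ → Fin 3 → ℝ) (g : Fin 3 → ℝ)
    -- system state (R(t), v(t)) ∈ SO(3) × ℝ³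
    (R : ℝ → Matrix (Fin 3) (Fin 3) ℝ) (v : ℝ → Fin 3 → ℝ)
    (hR_SO3 : ∀ t, (R t)ᵀ * R t = 1 ∧ (R t).det = 1)
    (hR : ∀ t, HasDerivAt R (R t * skewMat (Ω t)) t)
    (hv : ∀ t, HasDerivAt v (R t *ᵥ a t + g) t)
    -- observer state X̂(t) = (ẑ(t), Q̂(t), x̂(t)) ∈ (ℝ³ × SO(3)) ⋉ ℝ³
    (zhat : ℝ → Fin 3 → ℝ) (Qhat : ℝ → Matrix (Fin 3) (Fin 3) ℝ)
    (xhat : ℝ → Fin 3 → ℝ)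
    (hQhat_SO3 : ∀ t, (Qhat t)ᵀ * Qhat t = 1 ∧ (Qhat t).det = 1)
    (hzhat : ∀ t, HasDerivAt zhat g t)
    (hQhat : ∀ t, HasDerivAt Qhat (Qhat t * skewMat (Ω t)) t)
    (hxhat : ∀ t, HasDerivAt xhat (Qhat t *ᵥ a t + g) t) :
    -- both components of the error e = (RQ̂ᵀ, v − RQ̂ᵀx̂ − (I − RQ̂ᵀ)ẑ) are constant
    ∀ t : ℝ,
      HasDerivAt (fun s => R s * (Qhat s)ᵀ) 0 t ∧
      HasDerivAt (fun s =>
        v s - (R s * (Qhat s)ᵀ) *ᵥ xhat s - (1 - R s * (Qhat s)ᵀ) *ᵥ zhat s) 0 t := by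
  intro t
  -- first component
  have hE : HasDerivAt (fun s => R s * (Qhat s)ᵀ) 0 t := by
    have h := (hR t).mul (hasDerivAt_transpose (hQhat t))
    have : R t * skewMat (Ω t) * (Qhat t)ᵀ + R t * (Qhat t * skewMat (Ω t))ᵀ = 0 := by
      rw [Matrix.transpose_mul, skewMat_transpose, Matrix.neg_mul, mul_neg,
        mul_assoc]
      exact add_neg_cancel _
    rwa [this] at h
  refine ⟨hE, ?_⟩
  -- second component, componentwise
  have key : R t * (Qhat t)ᵀ * Qhat t = R t := by
    rw [mul_assoc, (hQhat_SO3 t).1, mul_one]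
  have hEij : ∀ i j, HasDerivAt (fun s => (R s * (Qhat s)ᵀ) i j) 0 t := by
    intro i j
    simpa using hasDerivAt_entry hE i j
  rw [hasDerivAt_pi]
  intro i
  have hvi : HasDerivAt (fun s => v s i) ((R t *ᵥ a t + g) i) t := hasDerivAt_pi.mp (hv t) i
  have hxi : ∀ j, HasDerivAt (fun s => xhat s j) ((Qhat t *ᵥ a t + g) j) t :=
    fun j => hasDerivAt_pi.mp (hxhat t) j
  have hzi : ∀ j, HasDerivAt (fun s => zhat s j) (g j) t :=
    fun j => hasDerivAt_pi.mp (hzhat t) j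
  have hEx : HasDerivAt (fun s => ((R s * (Qhat s)ᵀ) *ᵥ xhat s) i)
      (∑ j, (R t * (Qhat t)ᵀ) i j * (Qhat t *ᵥ a t + g) j) t := by
    have : ∀ s, ((R s * (Qhat s)ᵀ) *ᵥ xhat s) i
        = ∑ j, (R s * (Qhat s)ᵀ) i j * xhat s j := fun s => rfl
    simp only [this]
    refine HasDerivAt.fun_sum fun j _ => ?_
    simpa using (hEij i j).fun_mul (hxi j)
  have hEz : HasDerivAt (fun s => ((R s * (Qhat s)ᵀ) *ᵥ zhat s) i)
      (∑ j, (R t * (Qhat t)ᵀ) i j * g j) t := by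
    have : ∀ s, ((R s * (Qhat s)ᵀ) *ᵥ zhat s) i
        = ∑ j, (R s * (Qhat s)ᵀ) i j * zhat s j := fun s => rfl
    simp only [this]
    refine HasDerivAt.fun_sum fun j _ => ?_
    simpa using (hEij i j).fun_mul (hzi j)
  have hIz : HasDerivAt (fun s => ((1 - R s * (Qhat s)ᵀ) *ᵥ zhat s) i)
      (g i - ∑ j, (R t * (Qhat t)ᵀ) i j * g j) t := by
    have : ∀ s, ((1 - R s * (Qhat s)ᵀ) *ᵥ zhat s) i
        = zhat s i - ((R s * (Qhat s)ᵀ) *ᵥ zhat s) i := by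
      intro s
      rw [Matrix.sub_mulVec, Matrix.one_mulVec]
      rfl
    simp only [this]
    exact (hzi i).sub hEz
  have h := (hvi.sub hEx).sub hIz
  have hz : (R t *ᵥ a t + g) i - (∑ j, (R t * (Qhat t)ᵀ) i j * (Qhat t *ᵥ a t + g) j)
      - (g i - ∑ j, (R t * (Qhat t)ᵀ) i j * g j) = 0 := by
    have h1 : ∑ j, (R t * (Qhat t)ᵀ) i j * (Qhat t *ᵥ a t + g) j
        = (∑ j, (R t * (Qhat t)ᵀ) i j * (Qhat t *ᵥ a t) j)
          + ∑ j, (R t * (Qhat t)ᵀ) i j * g j := by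
      rw [← Finset.sum_add_distrib]
      congr 1; ext j; simp [Pi.add_apply, mul_add]
    have h2 : (∑ j, (R t * (Qhat t)ᵀ) i j * (Qhat t *ᵥ a t) j)
        = (R t *ᵥ a t) i := by
      have : (∑ j, (R t * (Qhat t)ᵀ) i j * (Qhat t *ᵥ a t) j)
          = ((R t * (Qhat t)ᵀ) *ᵥ (Qhat t *ᵥ a t)) i := rfl
      rw [this, Matrix.mulVec_mulVec, key]
    rw [h1, h2]
    simp [Pi.add_apply]
  rw [hz] at h
  exact h
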